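/- If G is a graph in which every vertex neighborhood induces a bipartite graph, then in the edge-clique graph K_e(G) every vertex neighborhood induces a graph of maximum degree at most 1 (i.e., a matching, possibly empty). -/

import Mathlib

open SimpleGraph

/-- The edge-clique graph `K_e(G)`: vertices are the edges of `G`, two edges
being adjacent iff their endpoints together span a clique of `G`. -/
def Ke {V : Type*} (G : SimpleGraph V) : SimpleGraph G.edgeSet where
  Adj e f := e ≠ f ∧ G.IsClique {x | x ∈ e.1 ∨ x ∈ f.1}
  symm := by
    constructor
    rintro e f ⟨hne, hc⟩
    refine ⟨hne.symm, ?_⟩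
    have h : {x | x ∈ f.1 ∨ x ∈ e.1} = {x | x ∈ e.1 ∨ x ∈ f.1} := by
      ext x; exact or_comm
    rw [h]; exact hc
  loopless := ⟨fun e h => h.1 rfl⟩

/-- No triangle inside a neighborhood when neighborhoods are bipartite. -/
lemma notri {V : Type*} (G : SimpleGraph V)
    (hbip : ∀ v : V, (G.induce (G.neighborSet v)).Colorable 2)
    {v a b c : V} (hva : G.Adj v a) (hvb : G.Adj v b) (hvc : G.Adj v c)
    (hab : G.Adj a b) (hac : G.Adj a c) (hbc : G.Adj b c) : False := by
  obtain ⟨C⟩ := hbip v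
  have h1 := C.valid (show (G.induce (G.neighborSet v)).Adj ⟨a, hva⟩ ⟨b, hvb⟩ by simpa using hab)
  have h2 := C.valid (show (G.induce (G.neighborSet v)).Adj ⟨a, hva⟩ ⟨c, hvc⟩ by simpa using hac)
  have h3 := C.valid (show (G.induce (G.neighborSet v)).Adj ⟨b, hvb⟩ ⟨c, hvc⟩ by simpa using hbc)
  have : ∀ p q r : Fin 2, p ≠ q → p ≠ r → q ≠ r → False := by decide
  exact this _ _ _ h1 h2 h3

/-- Structure of a `Ke`-neighbor of the edge `s(u,v)`: it shares an endpoint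
with `s(u,v)` and spans a triangle with it. -/
lemma adj_structure {V : Type*} (G : SimpleGraph V)
    (hbip : ∀ v : V, (G.induce (G.neighborSet v)).Colorable 2)
    {u v : V} {f : Sym2 V} (huv : G.Adj u v) (hf : f ∈ G.edgeSet)
    (hne : s(u, v) ≠ f) (hcl : G.IsClique {x | x ∈ s(u, v) ∨ x ∈ f}) :
    ∃ w, G.Adj u w ∧ G.Adj v w ∧ (f = s(u, w) ∨ f = s(v, w)) := by
  induction f using Sym2.ind with
  | _ a b =>
  have hab : G.Adj a b := hf
  have hu : u ∈ {x | x ∈ s(u, v) ∨ x ∈ s(a, b)} := Or.inl (Sym2.mem_mk_left u v)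
  have hv : v ∈ {x | x ∈ s(u, v) ∨ x ∈ s(a, b)} := Or.inl (Sym2.mem_mk_right u v)
  have ha : a ∈ {x | x ∈ s(u, v) ∨ x ∈ s(a, b)} := Or.inr (Sym2.mem_mk_left a b)
  have hb : b ∈ {x | x ∈ s(u, v) ∨ x ∈ s(a, b)} := Or.inr (Sym2.mem_mk_right a b)
  by_cases hau : a = u
  · subst hau
    refine ⟨b, hab, ?_, Or.inl rfl⟩
    by_cases hbv : b = v
    · exact absurd (by rw [hbv]) hne
    · exact hcl hv hb (fun h => hbv h.symm)
  · by_cases hav : a = v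
    · subst hav
      refine ⟨b, ?_, hab, Or.inr rfl⟩
      by_cases hbu : b = u
      · exact absurd (by rw [hbu, Sym2.eq_swap]) hne
      · exact hcl hu hb (fun h => hbu h.symm)
    · by_cases hbu : b = u
      · subst hbu
        refine ⟨a, hab.symm, ?_, Or.inl Sym2.eq_swap⟩
        exact hcl hv ha (fun h => hav h.symm)
      · by_cases hbv : b = v
        · subst hbv
          refine ⟨a, ?_, hab.symm, Or.inr Sym2.eq_swap⟩
          exact hcl hu ha (fun h => hau h.symm)
        · -- all four vertices distinct: K₄, contradiction
          have hua : G.Adj u a := hcl hu ha (fun h => hau h.symm)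
          have hub : G.Adj u b := hcl hu hb (fun h => hbu h.symm)
          have hva : G.Adj v a := hcl hv ha (fun h => hav h.symm)
          have hvb : G.Adj v b := hcl hv hb (fun h => hbv h.symm)
          exact (notri G hbip hua hub huv hab hva.symm hvb.symm).elim

/-- Key combinatorial step. -/
lemma key {V : Type*} (G : SimpleGraph V)
    (hbip : ∀ v : V, (G.induce (G.neighborSet v)).Colorable 2)
    {u v w x y : V} {g : Sym2 V}
    (huv : G.Adj u v) (huw : G.Adj u w) (hvw : G.Adj v w)
    (hge : g ≠ s(u, v))
    (hux : G.Adj u x) (hvx : G.Adj v x) (hgx : g = s(u, x) ∨ g = s(v, x))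
    (huy : G.Adj u y) (hwy : G.Adj w y) (hgy : g = s(u, y) ∨ g = s(w, y)) :
    g = s(v, w) := by
  rcases hgx with rfl | rfl
  · rcases hgy with hgy | hgy
    · rw [Sym2.eq_iff] at hgy
      rcases hgy with ⟨-, rfl⟩ | ⟨rfl, rfl⟩
      · exact (notri G hbip huv huw hux hvw hvx hwy).elim
      · exact absurd hux (G.irrefl)
    · rw [Sym2.eq_iff] at hgy
      rcases hgy with ⟨rfl, -⟩ | ⟨rfl, -⟩
      · exact absurd huw (G.irrefl)
      · exact absurd huy (G.irrefl)
  · rcases hgy with hgy | hgy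
    · rw [Sym2.eq_iff] at hgy
      rcases hgy with ⟨rfl, -⟩ | ⟨rfl, rfl⟩
      · exact absurd huv (G.irrefl)
      · exact absurd Sym2.eq_swap hge
    · rw [Sym2.eq_iff] at hgy
      rcases hgy with ⟨rfl, -⟩ | ⟨rfl, rfl⟩
      · exact absurd hvw (G.irrefl)
      · rfl

/-- If every vertex neighborhood of `G` induces a bipartite graph, then every
vertex neighborhood in `K_e(G)` induces a graph of maximum degree at most `1`:
if `f, g, h` are all neighbors of `e` and `f` is adjacent to both `g` and `h`,
then `g = h`. -/
theorem Ke_neighborhood_matching {V : Type*} (G : SimpleGraph V)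
    (hbip : ∀ v : V, (G.induce (G.neighborSet v)).Colorable 2) :
    ∀ e f g h : G.edgeSet, (Ke G).Adj e f → (Ke G).Adj e g → (Ke G).Adj e h →
      (Ke G).Adj f g → (Ke G).Adj f h → g = h := by
  rintro ⟨e, he⟩ f g h hef heg heh hfg hfh
  revert he hef heg heh
  induction e using Sym2.ind with
  | _ u v =>
  intro he hef heg heh
  have huv : G.Adj u v := he
  -- structure of f, g, h as neighbors of e = s(u,v)
  have hnef : s(u, v) ≠ f.1 := fun hh => hef.1 (Subtype.ext hh)
  have hneg : s(u, v) ≠ g.1 := fun hh => heg.1 (Subtype.ext hh)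
  have hneh : s(u, v) ≠ h.1 := fun hh => heh.1 (Subtype.ext hh)
  obtain ⟨w, huw, hvw, hfw⟩ := adj_structure G hbip huv f.2 hnef hef.2
  obtain ⟨x, hux, hvx, hgx⟩ := adj_structure G hbip huv g.2 hneg heg.2
  obtain ⟨z, huz, hvz, hhz⟩ := adj_structure G hbip huv h.2 hneh heh.2
  -- structure of g, h as neighbors of f
  have hfab : G.Adj u w ∨ f.1 = s(v, w) := by
    rcases hfw with hfw | hfw
    · exact Or.inl huw
    · exact Or.inr hfw
  rcases hfw with hfw | hfw
  · -- f = s(u, w)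
    have hclg : G.IsClique {x | x ∈ s(u, w) ∨ x ∈ g.1} := by rw [← hfw]; exact hfg.2
    have hclh : G.IsClique {x | x ∈ s(u, w) ∨ x ∈ h.1} := by rw [← hfw]; exact hfh.2
    have hfg1 : s(u, w) ≠ g.1 := fun hh => hfg.1 (Subtype.ext (hfw.trans hh))
    have hfh1 : s(u, w) ≠ h.1 := fun hh => hfh.1 (Subtype.ext (hfw.trans hh))
    obtain ⟨y, huy, hwy, hgy⟩ := adj_structure G hbip huw g.2 hfg1 hclg
    obtain ⟨y', huy', hwy', hhy⟩ := adj_structure G hbip huw h.2 hfh1 hclh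
    have hg : g.1 = s(v, w) :=
      key G hbip huv huw hvw (fun hh => hneg hh.symm) hux hvx hgx huy hwy hgy
    have hh' : h.1 = s(v, w) :=
      key G hbip huv huw hvw (fun hh => hneh hh.symm) huz hvz hhz huy' hwy' hhy
    exact Subtype.ext (hg.trans hh'.symm)
  · -- f = s(v, w); swap roles of u and v
    have hclg : G.IsClique {x | x ∈ s(v, w) ∨ x ∈ g.1} := by rw [← hfw]; exact hfg.2
    have hclh : G.IsClique {x | x ∈ s(v, w) ∨ x ∈ h.1} := by rw [← hfw]; exact hfh.2
    have hfg1 : s(v, w) ≠ g.1 := fun hh => hfg.1 (Subtype.ext (hfw.trans hh))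
    have hfh1 : s(v, w) ≠ h.1 := fun hh => hfh.1 (Subtype.ext (hfw.trans hh))
    obtain ⟨y, hvy, hwy, hgy⟩ := adj_structure G hbip hvw g.2 hfg1 hclg
    obtain ⟨y', hvy', hwy', hhy⟩ := adj_structure G hbip hvw h.2 hfh1 hclh
    have hg : g.1 = s(u, w) :=
      key G hbip huv.symm hvw huw
        (fun hh => hneg (hh.trans Sym2.eq_swap).symm)
        hvx hux (hgx.symm) hvy hwy hgy
    have hh' : h.1 = s(u, w) :=
      key G hbip huv.symm hvw huw
        (fun hh => hneh (hh.trans Sym2.eq_swap).symm)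
        hvz huz (hhz.symm) hvy' hwy' hhy
    exact Subtype.ext (hg.trans hh'.symm)
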